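/- Let Y1, Y0 be random variables valued in {0,...,J-1} with Y0 ≤ Y1 ≤ Y0+1 almost surely, and let y ∈ {1,...,J-1} with pr(Y1 = y) > 0. Then pr(Y0 ≠ y | Y1 = y) = Σ_{j=0}^{y-1} (pr(Y0 = j) - pr(Y1 = j)) / pr(Y1 = y). -/

import Mathlib

open MeasureTheory Finset

/-- Probability of an event as a real number. -/
noncomputable def pr {Ω : Type*} [MeasurableSpace Ω] (μ : Measure Ω) (s : Set Ω) : ℝ :=
  (μ s).toReal

/-- Identification of the probability of necessity `pr(Y0 ≠ y ∣ Y1 = y)` under the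
monotonic incremental treatment effect assumption. -/
theorem pn_neq_identification {Ω : Type*} [MeasurableSpace Ω] (μ : Measure Ω)
    [IsProbabilityMeasure μ] (J : ℕ) (Y1 Y0 : Ω → ℕ)
    (hY1m : Measurable Y1) (hY0m : Measurable Y0)
    (hY1 : ∀ ω, Y1 ω < J) (hY0 : ∀ ω, Y0 ω < J)
    (hmono : ∀ᵐ ω ∂μ, Y0 ω ≤ Y1 ω ∧ Y1 ω ≤ Y0 ω + 1)
    (y : ℕ) (hy1 : 1 ≤ y) (hy2 : y ≤ J - 1)
    (hpos : 0 < pr μ {ω | Y1 ω = y}) :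
    pr μ {ω | Y0 ω ≠ y ∧ Y1 ω = y} / pr μ {ω | Y1 ω = y}
      = (∑ j ∈ Finset.range y, (pr μ {ω | Y0 ω = j} - pr μ {ω | Y1 ω = j}))
          / pr μ {ω | Y1 ω = y} := by
  congr 1
  -- sum over levels equals measure of {Y < y}
  have hsum : ∀ (Y : Ω → ℕ), Measurable Y →
      μ {ω | Y ω < y} = ∑ j ∈ Finset.range y, μ {ω | Y ω = j} := by
    intro Y hY
    have hU : {ω | Y ω < y} = ⋃ j ∈ Finset.range y, {ω | Y ω = j} := by
      ext ω
      simp [eq_comm]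
    rw [hU, measure_biUnion_finset]
    · intro i _ j _ hij
      refine Set.disjoint_left.2 fun ω h1 h2 => hij ?_
      simp only [Set.mem_setOf_eq] at h1 h2
      omega
    · intro j _
      exact hY (measurableSet_singleton j)
  -- key measure identity
  have hkey : μ {ω | Y0 ω < y} = μ {ω | Y1 ω < y} + μ {ω | Y0 ω ≠ y ∧ Y1 ω = y} := by
    have hae : ({ω | Y0 ω < y} : Set Ω) =ᵐ[μ]
        (({ω | Y1 ω < y} ∪ {ω | Y0 ω ≠ y ∧ Y1 ω = y} : Set Ω)) := by
      filter_upwards [hmono] with ω ⟨h1, h2⟩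
      have : (Y0 ω < y) ↔ (Y1 ω < y ∨ (Y0 ω ≠ y ∧ Y1 ω = y)) := by omega
      show (ω ∈ {ω | Y0 ω < y}) = (ω ∈ ({ω | Y1 ω < y} ∪ {ω | Y0 ω ≠ y ∧ Y1 ω = y}))
      simpa [Set.mem_union, Set.mem_setOf_eq] using this
    have hmeas : MeasurableSet {ω | Y0 ω ≠ y ∧ Y1 ω = y} := by
      have : {ω | Y0 ω ≠ y ∧ Y1 ω = y}
          = (Y0 ⁻¹' {y})ᶜ ∩ Y1 ⁻¹' {y} := by
        ext ω; simp [Set.mem_setOf_eq]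
      rw [this]
      exact ((hY0m (measurableSet_singleton y)).compl).inter
        (hY1m (measurableSet_singleton y))
    have hdisj : Disjoint {ω | Y1 ω < y} {ω | Y0 ω ≠ y ∧ Y1 ω = y} := by
      refine Set.disjoint_left.2 fun ω h1 h2 => ?_
      simp only [Set.mem_setOf_eq] at h1 h2
      omega
    calc μ {ω | Y0 ω < y}
        = μ ({ω | Y1 ω < y} ∪ {ω | Y0 ω ≠ y ∧ Y1 ω = y}) := measure_congr hae
      _ = μ {ω | Y1 ω < y} + μ {ω | Y0 ω ≠ y ∧ Y1 ω = y} := measure_union hdisj hmeas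
  -- pass to reals
  have hfin : ∀ s : Set Ω, μ s ≠ ⊤ := fun s => measure_ne_top μ s
  have h0 : pr μ {ω | Y0 ω ≠ y ∧ Y1 ω = y}
      = pr μ {ω | Y0 ω < y} - pr μ {ω | Y1 ω < y} := by
    unfold pr
    rw [hkey, ENNReal.toReal_add (hfin _) (hfin _)]
    ring
  have hsr : ∀ (Y : Ω → ℕ), Measurable Y →
      pr μ {ω | Y ω < y} = ∑ j ∈ Finset.range y, pr μ {ω | Y ω = j} := by
    intro Y hY
    unfold pr
    rw [hsum Y hY, ENNReal.toReal_sum (fun j _ => hfin _)]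
  rw [h0, hsr Y0 hY0m, hsr Y1 hY1m, Finset.sum_sub_distrib]
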